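/- Let n ≥ 1, let g_1,…,g_n : ℝ → ℝ be continuous, let l ≤ x_1 ≤ x_2 ≤ … ≤ x_n be real numbers, and set G_i(t) = ∫_l^t g_i(s) ds. Then the integral of det( g_i(y_j) )_{i,j=1}^n over the region W^{n,n}(x) = { y ∈ ℝ^n : l ≤ y_1 ≤ x_1 ≤ y_2 ≤ x_2 ≤ … ≤ y_n ≤ x_n } equals det( G_i(x_j) )_{i,j=1}^n. -/

import Mathlib

open MeasureTheory

/-- Integration of a determinant over the interlacing region
`W^{n,n}(x) = {y : l ≤ y_1 ≤ x_1 ≤ y_2 ≤ x_2 ≤ … ≤ y_n ≤ x_n}`: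
`∫_{W^{n,n}(x)} det(g_i(y_j))_{i,j=1}^n dy = det(G_i(x_j))_{i,j=1}^n` where
`G_i(t) = ∫_l^t g_i(s) ds`. -/
theorem integral_det_over_interlacing_region_nn (n : ℕ) (hn : 1 ≤ n)
    (g : Fin n → ℝ → ℝ) (hg : ∀ i, Continuous (g i))
    (l : ℝ) (x : Fin n → ℝ) (hlx : l ≤ x ⟨0, hn⟩) (hx : Monotone x) :
    ∫ y in Set.univ.pi (fun j : Fin n =>
        Set.Icc (Fin.cases (motive := fun _ => ℝ) l (fun i : Fin n => x i) j.castSucc) (x j)),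
        Matrix.det (Matrix.of fun i j : Fin n => g i (y j))
      = Matrix.det (Matrix.of fun i j : Fin n => ∫ s in l..(x j), g i s) := by
  classical
  set c : Fin (n + 1) → ℝ := Fin.cases (motive := fun _ => ℝ) l (fun i : Fin n => x i) with hc
  set a : ℕ → ℝ := fun k => c ⟨min k n, by omega⟩ with ha
  have ha0 : a 0 = l := by simp [ha, hc]
  have hax : ∀ j : Fin n, a (j.1 + 1) = x j := by
    intro j
    have h1 : (⟨min (j.1 + 1) n, by omega⟩ : Fin (n + 1)) = Fin.succ j := by
      ext; simp [Nat.min_eq_left j.2, Fin.val_succ]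
    simp only [ha]
    rw [h1]; simp [hc]
  have hacast : ∀ j : Fin n, a j.1 = c j.castSucc := by
    intro j
    have h1 : (⟨min j.1 n, by omega⟩ : Fin (n + 1)) = j.castSucc := by
      ext; simp [Nat.min_eq_left (Nat.le_of_lt j.2)]
    simp only [ha]
    rw [h1]
  have hcle : ∀ j : Fin n, c j.castSucc ≤ x j := by
    intro j
    rcases Nat.eq_zero_or_pos j.1 with h0 | hpos
    · have hj0 : j.castSucc = 0 := by ext; simpa using h0
      rw [hj0]
      have hc0 : c 0 = l := by simp [hc]
      rw [hc0]
      exact le_trans hlx (hx (by simp [Fin.le_def, h0]))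
    · obtain ⟨k, hk⟩ : ∃ k, j.1 = k + 1 := ⟨j.1 - 1, by omega⟩
      have hkn : k < n := by omega
      have hj : j.castSucc = Fin.succ ⟨k, hkn⟩ := by ext; simp [hk]
      rw [hj]
      have hcs : c (Fin.succ ⟨k, hkn⟩) = x ⟨k, hkn⟩ := by simp [hc]
      rw [hcs]
      exact hx (by simp [Fin.le_def, hk])
  set S : Set (Fin n → ℝ) :=
    Set.univ.pi (fun j : Fin n => Set.Icc (c j.castSucc) (x j)) with hS
  have hSm : MeasurableSet S := MeasurableSet.univ_pi fun j => measurableSet_Icc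
  set B : Matrix (Fin n) (Fin n) ℝ :=
    Matrix.of (fun i j : Fin n => ∫ s in (c j.castSucc)..(x j), g i s) with hB
  -- Step 1: the LHS equals det B
  have step1 : (∫ y in S, Matrix.det (Matrix.of fun i j : Fin n => g i (y j))) = B.det := by
    have hfact : ∀ σ : Equiv.Perm (Fin n),
        (∫ y in S, ∏ j, g (σ j) (y j)) = ∏ j, B (σ j) j := by
      intro σ
      have hind : (fun y : Fin n → ℝ => Set.indicator S (fun y => ∏ j, g (σ j) (y j)) y)
          = fun y => ∏ j, Set.indicator (Set.Icc (c j.castSucc) (x j)) (g (σ j)) (y j) := by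
        funext y
        by_cases hy : y ∈ S
        · rw [Set.indicator_of_mem hy]
          refine Finset.prod_congr rfl fun j _ => ?_
          rw [Set.indicator_of_mem (hy j (Set.mem_univ j))]
        · rw [Set.indicator_of_notMem hy]
          obtain ⟨j, -, hj⟩ : ∃ j ∈ Finset.univ, y j ∉ Set.Icc (c j.castSucc) (x j) := by
            by_contra h
            push_neg at h
            exact hy fun j _ => h j (Finset.mem_univ j)
          exact (Finset.prod_eq_zero (Finset.mem_univ j)
            (Set.indicator_of_notMem hj _)).symm
      rw [← integral_indicator hSm, hind,
        MeasureTheory.integral_fintype_prod_volume_eq_prod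
          (fun j (t : ℝ) => Set.indicator (Set.Icc (c j.castSucc) (x j)) (g (σ j)) t)]
      refine Finset.prod_congr rfl fun j _ => ?_
      rw [integral_indicator measurableSet_Icc, hB]
      simp only [Matrix.of_apply]
      rw [intervalIntegral.integral_of_le (hcle j), integral_Icc_eq_integral_Ioc]
    have hScpt : IsCompact S := isCompact_univ_pi fun j => isCompact_Icc
    have hint : ∀ σ : Equiv.Perm (Fin n),
        IntegrableOn (fun y : Fin n → ℝ =>
          ((Equiv.Perm.sign σ : ℤ) : ℝ) * ∏ j, g (σ j) (y j)) S volume := by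
      intro σ
      exact (continuous_const.mul (continuous_finset_prod _ fun j _ =>
        (hg (σ j)).comp (continuous_apply j))).continuousOn.integrableOn_compact hScpt
    calc (∫ y in S, Matrix.det (Matrix.of fun i j : Fin n => g i (y j)))
        = ∫ y in S, ∑ σ : Equiv.Perm (Fin n),
            ((Equiv.Perm.sign σ : ℤ) : ℝ) * ∏ j, g (σ j) (y j) := by
          refine setIntegral_congr_fun hSm fun y _ => ?_
          rw [Matrix.det_apply']
          rfl
      _ = ∑ σ : Equiv.Perm (Fin n), ∫ y in S,
            ((Equiv.Perm.sign σ : ℤ) : ℝ) * ∏ j, g (σ j) (y j) :=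
          integral_finset_sum _ fun σ _ => hint σ
      _ = ∑ σ : Equiv.Perm (Fin n),
            ((Equiv.Perm.sign σ : ℤ) : ℝ) * ∏ j, B (σ j) j := by
          refine Finset.sum_congr rfl fun σ _ => ?_
          rw [integral_const_mul, hfact σ]
      _ = B.det := (Matrix.det_apply' B).symm
  -- Step 2: det B equals the RHS
  have step2 : B.det = Matrix.det (Matrix.of fun i j : Fin n => ∫ s in l..(x j), g i s) := by
    set M : Matrix (Fin n) (Fin n) ℝ :=
      Matrix.of (fun k j : Fin n => if k ≤ j then (1 : ℝ) else 0) with hM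
    have hBM : B * M = Matrix.of fun i j : Fin n => ∫ s in l..(x j), g i s := by
      ext i j
      rw [Matrix.mul_apply]
      have h1 : ∀ k : Fin n, B i k * M k j = if k ≤ j then ∫ s in a k.1..a (k.1 + 1), g i s
          else 0 := by
        intro k
        simp only [hB, hM, Matrix.of_apply]
        rw [hacast k, hax k]
        split <;> simp
      rw [Finset.sum_congr rfl fun k _ => h1 k]
      have h2 : (∑ k : Fin n, if k ≤ j then ∫ s in a k.1..a (k.1 + 1), g i s else 0)
          = ∑ k ∈ Finset.range n, if k ≤ j.1 then ∫ s in a k..a (k + 1), g i s else 0 := by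
        rw [Finset.sum_range fun k => _]
        · rfl
      rw [h2, ← Finset.sum_filter]
      have h3 : (Finset.range n).filter (· ≤ j.1) = Finset.range (j.1 + 1) := by
        ext k
        simp only [Finset.mem_filter, Finset.mem_range]
        constructor
        · rintro ⟨-, h⟩; omega
        · intro h; exact ⟨by omega, by omega⟩
      rw [h3, intervalIntegral.sum_integral_adjacent_intervals
        (fun k _ => (hg i).intervalIntegrable _ _), ha0, hax j]
      rfl
    have hMdet : M.det = 1 := by
      have htri : M.BlockTriangular id := by
        intro k j hkj
        simp only [hM, Matrix.of_apply]
        exact if_neg (not_le.mpr hkj)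
      rw [Matrix.det_of_upperTriangular htri]
      simp [hM]
    rw [← hBM, Matrix.det_mul, hMdet, mul_one]
  exact step1.trans step2
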